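/- Let μ₁,…,μ_J be probability measures on ℝ with finite second moments and quantile functions F₁^{-1},…,F_J^{-1}. Then the probability measure μ_B with quantile function F_B^{-1}(t) = (1/J)∑_{k=1}^J F_k^{-1}(t) minimizes η ↦ (1/J)∑_{j=1}^J W₂²(μ_j, η) over all probability measures η on ℝ with finite second moment. -/

import Mathlib

open MeasureTheory

noncomputable section

/-- Squared 2-Wasserstein distance on ℝ: infimum over couplings of ∫ (x-y)² dπ. -/
def W2sq (μ ν : Measure ℝ) : ℝ :=
  sInf { c | ∃ π : Measure (ℝ × ℝ), IsProbabilityMeasure π ∧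
    π.map Prod.fst = μ ∧ π.map Prod.snd = ν ∧
    c = ∫ p, (p.1 - p.2) ^ 2 ∂π }

/-- Quantile function: F⁻¹(t) = inf {x : F(x) ≥ t}. -/
def quantile (μ : Measure ℝ) (t : ℝ) : ℝ :=
  sInf { x | ENNReal.ofReal t ≤ μ (Set.Iic x) }

noncomputable section
open Set
open scoped ENNReal

variable {ν : Measure ℝ} [IsProbabilityMeasure ν]

lemma tendsto_Iic_atTop : Filter.Tendsto (fun x => ν (Set.Iic x)) Filter.atTop (nhds 1) := by
  have := MeasureTheory.tendsto_measure_iUnion_atTop (μ := ν) (s := fun x : ℝ => Set.Iic x)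
    (fun a b hab => Set.Iic_subset_Iic.2 hab)
  simpa [Set.iUnion_Iic, Function.comp_def] using this

lemma tendsto_Iic_atBot : Filter.Tendsto (fun x => ν (Set.Iic x)) Filter.atBot (nhds 0) := by
  have := MeasureTheory.tendsto_measure_iInter_atBot (μ := ν)
    (s := fun x : ℝ => Set.Iic x) (fun x => (measurableSet_Iic).nullMeasurableSet)
    (fun a b hab => Set.Iic_subset_Iic.2 hab) ⟨0, measure_ne_top _ _⟩
  have he : ⋂ x : ℝ, Set.Iic x = ∅ := by
    refine Set.eq_empty_iff_forall_notMem.2 fun x hx => ?_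
    have := Set.mem_iInter.1 hx (x - 1)
    simp at this; linarith
  simpa [he, Function.comp_def] using this

lemma quantile_set_nonempty {t : ℝ} (ht : t < 1) :
    { x | ENNReal.ofReal t ≤ ν (Set.Iic x) }.Nonempty := by
  have h1 : ENNReal.ofReal t < 1 := by
    rcases le_or_gt t 0 with h0 | h0
    · simpa [ENNReal.ofReal_eq_zero.2 h0] using one_pos
    · exact ENNReal.ofReal_lt_one.2 ht
  obtain ⟨x, hx⟩ := (tendsto_Iic_atTop (ν := ν)).eventually_const_le h1 |>.exists
  exact ⟨x, hx⟩

lemma quantile_set_bddBelow {t : ℝ} (ht : 0 < t) :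
    BddBelow { x | ENNReal.ofReal t ≤ ν (Set.Iic x) } := by
  have h1 : (0 : ℝ≥0∞) < ENNReal.ofReal t := ENNReal.ofReal_pos.2 ht
  obtain ⟨x, hx⟩ := ((tendsto_Iic_atBot (ν := ν)).eventually_lt_const h1).exists
  refine ⟨x, fun y hy => ?_⟩
  by_contra h
  push_neg at h
  exact absurd (le_trans hy (measure_mono (Set.Iic_subset_Iic.2 h.le))) (not_le.2 hx)

/-- The quantile set is closed from the left: its infimum belongs to it. -/
lemma le_measure_Iic_quantile {t : ℝ} (ht : 0 < t) (ht1 : t < 1) :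
    ENNReal.ofReal t ≤ ν (Set.Iic (quantile ν t)) := by
  set q := quantile ν t with hq
  have key : Set.Iic q = ⋂ n : ℕ, Set.Iic (q + 1 / (n + 1)) := by
    ext x
    simp only [Set.mem_Iic, Set.mem_iInter]
    constructor
    · intro h n; exact h.trans (le_add_of_nonneg_right (by positivity))
    · intro h
      by_contra hx
      push_neg at hx
      obtain ⟨n, hn⟩ := exists_nat_one_div_lt (show (0:ℝ) < x - q by linarith)
      have := h n
      linarith
  have hcont : Filter.Tendsto (fun n : ℕ => ν (Set.Iic (q + 1 / (n + 1)))) Filter.atTop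
      (nhds (ν (Set.Iic q))) := by
    rw [key]
    refine MeasureTheory.tendsto_measure_iInter_atTop
      (fun n => measurableSet_Iic.nullMeasurableSet) ?_ ⟨0, measure_ne_top _ _⟩
    intro a b hab
    refine Set.Iic_subset_Iic.2 ?_
    have h1 : (a:ℝ) ≤ b := by exact_mod_cast hab
    have h2 : 1/((b:ℝ)+1) ≤ 1/((a:ℝ)+1) :=
      one_div_le_one_div_of_le (by positivity) (by linarith)
    linarith
  refine ge_of_tendsto hcont (Filter.Eventually.of_forall fun n => ?_)
  have hmem : q + 1/(n+1) ∈ { x | ENNReal.ofReal t ≤ ν (Set.Iic x) } := by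
    have : ∀ ε > 0, ∃ y ∈ { x | ENNReal.ofReal t ≤ ν (Set.Iic x) }, y < q + ε := by
      intro ε hε
      obtain ⟨y, hy, hy2⟩ := Real.lt_sInf_add_pos (quantile_set_nonempty (ν := ν) ht1) hε
      exact ⟨y, hy, by simpa [hq, quantile] using hy2⟩
    obtain ⟨y, hy, hylt⟩ := this (1/(n+1)) (by positivity)
    exact le_trans hy (measure_mono (Set.Iic_subset_Iic.2 hylt.le))
  exact hmem

lemma quantile_le_iff {t x : ℝ} (ht : 0 < t) (ht1 : t < 1) :
    quantile ν t ≤ x ↔ ENNReal.ofReal t ≤ ν (Set.Iic x) := by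
  constructor
  · intro h
    exact le_trans (le_measure_Iic_quantile ht ht1) (measure_mono (Set.Iic_subset_Iic.2 h))
  · intro h
    exact csInf_le (quantile_set_bddBelow ht) h

lemma monotoneOn_quantile : MonotoneOn (quantile ν) (Set.Ioo 0 1) := by
  intro a ha b hb hab
  refine le_csInf (quantile_set_nonempty hb.2) fun x hx => ?_
  simp only [Set.mem_setOf_eq] at hx
  refine csInf_le (quantile_set_bddBelow ha.1) ?_
  simp only [Set.mem_setOf_eq]
  exact le_trans (by gcongr) hx

end

noncomputable section

open scoped ENNReal
open MeasureTheory Set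

/-- uniform measure on (0,1) -/
def U : Measure ℝ := volume.restrict (Set.Ioo 0 1)

instance : IsProbabilityMeasure U := by
  constructor
  rw [U, Measure.restrict_apply_univ, Real.volume_Ioo]
  norm_num

variable {ν : Measure ℝ} [IsProbabilityMeasure ν]

lemma aemeasurable_quantile : AEMeasurable (quantile ν) U :=
  aemeasurable_restrict_of_monotoneOn measurableSet_Ioo monotoneOn_quantile

lemma map_quantile : U.map (quantile ν) = ν := by
  have hmap : IsFiniteMeasure (U.map (quantile ν)) := by
    have : IsProbabilityMeasure (U.map (quantile ν)) :=
      Measure.isProbabilityMeasure_map aemeasurable_quantile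
    infer_instance
  refine Measure.ext_of_Iic _ _ fun x => ?_
  rw [Measure.map_apply_of_aemeasurable aemeasurable_quantile measurableSet_Iic,
    U, Measure.restrict_apply' measurableSet_Ioo]
  set c : ℝ := (ν (Set.Iic x)).toReal with hc
  have hc1 : c ≤ 1 := by
    rw [hc]
    exact ENNReal.toReal_le_of_le_ofReal zero_le_one (by simpa using prob_le_one)
  have hc0 : 0 ≤ c := ENNReal.toReal_nonneg
  have hcc : ENNReal.ofReal c = ν (Set.Iic x) := ENNReal.ofReal_toReal (measure_ne_top _ _)
  have hE : quantile ν ⁻¹' Set.Iic x ∩ Set.Ioo 0 1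
      = {t | t ∈ Set.Ioo (0:ℝ) 1 ∧ t ≤ c} := by
    ext t
    simp only [Set.mem_inter_iff, Set.mem_preimage, Set.mem_Iic, Set.mem_setOf_eq]
    constructor
    · rintro ⟨h1, h2⟩
      refine ⟨h2, ?_⟩
      have := (quantile_le_iff h2.1 h2.2).1 h1
      rw [← hcc] at this
      exact (ENNReal.ofReal_le_ofReal_iff hc0).1 this
    · rintro ⟨h2, h1⟩
      refine ⟨?_, h2⟩
      rw [quantile_le_iff h2.1 h2.2, ← hcc]
      exact ENNReal.ofReal_le_ofReal h1
  rw [hE, ← hcc]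
  rcases lt_or_ge c 1 with h | h
  · have : {t | t ∈ Set.Ioo (0:ℝ) 1 ∧ t ≤ c} = Set.Ioc 0 c := by
      ext t
      simp only [Set.mem_setOf_eq, Set.mem_Ioo, Set.mem_Ioc]
      exact ⟨fun ⟨⟨a, b⟩, d⟩ => ⟨a, d⟩, fun ⟨a, d⟩ => ⟨⟨a, lt_of_le_of_lt d h⟩, d⟩⟩
    rw [this, Real.volume_Ioc]
    norm_num
  · have hc1' : c = 1 := le_antisymm hc1 h
    have : {t | t ∈ Set.Ioo (0:ℝ) 1 ∧ t ≤ c} = Set.Ioo 0 1 := by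
      ext t
      simp only [Set.mem_setOf_eq, Set.mem_Ioo, hc1']
      exact ⟨fun ⟨a, _⟩ => a, fun a => ⟨a, a.2.le⟩⟩
    rw [this, Real.volume_Ioo, hc1']
    norm_num

end

noncomputable section
open scoped ENNReal
open MeasureTheory Set

variable {ν₁ ν₂ : Measure ℝ} [IsProbabilityMeasure ν₁] [IsProbabilityMeasure ν₂]

/-- the comonotone (quantile) coupling -/
def piQ (ν₁ ν₂ : Measure ℝ) : Measure (ℝ × ℝ) :=
  U.map (fun t => (quantile ν₁ t, quantile ν₂ t))

lemma aemeasurable_pairQ :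
    AEMeasurable (fun t => (quantile ν₁ t, quantile ν₂ t)) U :=
  (aemeasurable_quantile (ν := ν₁)).prodMk (aemeasurable_quantile (ν := ν₂))

instance : IsProbabilityMeasure (piQ ν₁ ν₂) :=
  Measure.isProbabilityMeasure_map aemeasurable_pairQ

lemma piQ_fst : (piQ ν₁ ν₂).map Prod.fst = ν₁ := by
  rw [piQ, AEMeasurable.map_map_of_aemeasurable measurable_fst.aemeasurable aemeasurable_pairQ]
  exact map_quantile

lemma piQ_snd : (piQ ν₁ ν₂).map Prod.snd = ν₂ := by
  rw [piQ, AEMeasurable.map_map_of_aemeasurable measurable_snd.aemeasurable aemeasurable_pairQ]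
  exact map_quantile

lemma measure_preimage_Ioi (ν : Measure ℝ) [IsProbabilityMeasure ν] (s : ℝ) :
    volume (quantile ν ⁻¹' Set.Ioi s ∩ Set.Ioo 0 1) = ν (Set.Ioi s) := by
  conv_rhs => rw [← map_quantile (ν := ν)]
  rw [Measure.map_apply_of_aemeasurable aemeasurable_quantile measurableSet_Ioi, U,
    Measure.restrict_apply' measurableSet_Ioo]

lemma piQ_survival (s t : ℝ) :
    piQ ν₁ ν₂ {p : ℝ × ℝ | s < p.1 ∧ t < p.2}
      = min (ν₁ (Set.Ioi s)) (ν₂ (Set.Ioi t)) := by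
  have hms : MeasurableSet {p : ℝ × ℝ | s < p.1 ∧ t < p.2} :=
    (measurable_fst measurableSet_Ioi).inter (measurable_snd measurableSet_Ioi)
  rw [piQ, Measure.map_apply_of_aemeasurable aemeasurable_pairQ hms, U,
    Measure.restrict_apply' measurableSet_Ioo]
  set A := quantile ν₁ ⁻¹' Set.Ioi s ∩ Set.Ioo (0:ℝ) 1 with hA
  set B := quantile ν₂ ⁻¹' Set.Ioi t ∩ Set.Ioo (0:ℝ) 1 with hB
  have hpre : (fun u => (quantile ν₁ u, quantile ν₂ u)) ⁻¹' {p : ℝ × ℝ | s < p.1 ∧ t < p.2}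
      ∩ Set.Ioo 0 1 = A ∩ B := by
    ext u
    simp only [hA, hB, Set.mem_inter_iff, Set.mem_preimage, Set.mem_setOf_eq, Set.mem_Ioi]
    tauto
  rw [hpre]
  have hup : ∀ (μ' : Measure ℝ) (_ : IsProbabilityMeasure μ') (r : ℝ) (u v : ℝ),
      u ∈ quantile μ' ⁻¹' Set.Ioi r ∩ Set.Ioo (0:ℝ) 1 → v ∈ Set.Ioo (0:ℝ) 1 → u ≤ v →
      v ∈ quantile μ' ⁻¹' Set.Ioi r ∩ Set.Ioo (0:ℝ) 1 := by
    rintro μ' hμ' r u v ⟨hu1, hu2⟩ hv huv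
    exact ⟨lt_of_lt_of_le hu1 (monotoneOn_quantile hu2 hv huv), hv⟩
  have hsub : A ⊆ B ∨ B ⊆ A := by
    by_cases h : A ⊆ B
    · exact Or.inl h
    · right
      rw [Set.not_subset] at h
      obtain ⟨a, haA, haB⟩ := h
      intro b hbB
      rcases le_total a b with hab | hab
      · exact hup ν₁ inferInstance s a b haA hbB.2 hab
      · exact absurd (hup ν₂ inferInstance t b a hbB haA.2 hab) haB
  have e1 : volume A = ν₁ (Set.Ioi s) := by rw [hA]; exact measure_preimage_Ioi ν₁ s
  have e2 : volume B = ν₂ (Set.Ioi t) := by rw [hB]; exact measure_preimage_Ioi ν₂ t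
  rcases hsub with h | h
  · rw [Set.inter_eq_left.2 h, e1]
    have : ν₁ (Set.Ioi s) ≤ ν₂ (Set.Ioi t) := by rw [← e1, ← e2]; exact measure_mono h
    exact (min_eq_left this).symm
  · rw [Set.inter_eq_right.2 h, e2]
    have : ν₂ (Set.Ioi t) ≤ ν₁ (Set.Ioi s) := by rw [← e1, ← e2]; exact measure_mono h
    exact (min_eq_right this).symm

end

noncomputable section
open scoped ENNReal
open MeasureTheory Set

open scoped Classical

def phi (s a : ℝ) : ℝ := (if s < a then (1:ℝ) else 0) - (if s < 0 then (1:ℝ) else 0)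

def sg (a : ℝ) : ℝ := if 0 ≤ a then 1 else -1

def iv (a : ℝ) : Set ℝ := if 0 ≤ a then Set.Ico 0 a else Set.Ico a 0

lemma phi_eq (s a : ℝ) : phi s a = sg a * (if s ∈ iv a then 1 else 0) := by
  have hmem : (s ∈ iv a) ↔ (if 0 ≤ a then 0 ≤ s ∧ s < a else a ≤ s ∧ s < 0) := by
    unfold iv; split_ifs <;> simp [Set.mem_Ico]
  unfold phi sg
  simp only [hmem]
  rcases le_or_gt 0 a with h | h
  · simp only [if_pos h]
    rcases lt_or_ge s 0 with hs | hs
    · rw [if_pos (lt_of_lt_of_le hs h), if_pos hs, if_neg (by rintro ⟨h1, _⟩; linarith)]; ring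
    · rcases lt_or_ge s a with h2 | h2
      · rw [if_pos h2, if_neg (by linarith), if_pos ⟨hs, h2⟩]; ring
      · rw [if_neg (by linarith), if_neg (by linarith), if_neg (by rintro ⟨_, h1⟩; linarith)]
        ring
  · simp only [if_neg (not_le.2 h)]
    rcases lt_or_ge s a with hs | hs
    · rw [if_pos hs, if_pos (by linarith), if_neg (by rintro ⟨h1, _⟩; linarith)]; ring
    · rcases lt_or_ge s 0 with h2 | h2
      · rw [if_neg (by linarith), if_pos h2, if_pos ⟨hs, h2⟩]; ring
      · rw [if_neg (by linarith), if_neg (by linarith), if_neg (by rintro ⟨_, h1⟩; linarith)]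
        ring

lemma measurableSet_iv (a : ℝ) : MeasurableSet (iv a) := by
  unfold iv; split_ifs <;> exact measurableSet_Ico

lemma volume_iv (a : ℝ) : volume (iv a) = ENNReal.ofReal |a| := by
  unfold iv
  split_ifs with h
  · rw [Real.volume_Ico, abs_of_nonneg h, sub_zero]
  · rw [Real.volume_Ico, abs_of_neg (not_le.1 h), zero_sub]

lemma sg_mul_abs (a : ℝ) : sg a * |a| = a := by
  unfold sg
  split_ifs with h
  · rw [abs_of_nonneg h]; ring
  · rw [abs_of_neg (not_le.1 h)]; ring

lemma abs_sg (a : ℝ) : |sg a| = 1 := by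
  unfold sg; split_ifs <;> norm_num

lemma iteOneMul (P Q : Prop) [Decidable P] [Decidable Q] :
    (if P then (1:ℝ) else 0) * (if Q then (1:ℝ) else 0) = if P ∧ Q then (1:ℝ) else 0 := by
  by_cases hP : P <;> by_cases hQ : Q <;> simp [hP, hQ]

lemma Fprod_eq (a b : ℝ) : (fun st : ℝ × ℝ => phi st.1 a * phi st.2 b)
    = fun st => (sg a * sg b) * Set.indicator (iv a ×ˢ iv b) (fun _ => (1:ℝ)) st := by
  funext st
  rw [phi_eq st.1 a, phi_eq st.2 b, Set.indicator_apply]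
  simp only [Set.mem_prod]
  have h1 : (sg a * if st.1 ∈ iv a then (1:ℝ) else 0) * (sg b * if st.2 ∈ iv b then (1:ℝ) else 0)
      = (sg a * sg b) * ((if st.1 ∈ iv a then (1:ℝ) else 0) * (if st.2 ∈ iv b then (1:ℝ) else 0)) := by
    ring
  rw [h1, iteOneMul]

lemma measurableSet_ivprod (a b : ℝ) : MeasurableSet (iv a ×ˢ iv b) :=
  (measurableSet_iv a).prod (measurableSet_iv b)

lemma volume_ivprod (a b : ℝ) :
    (volume.prod volume) (iv a ×ˢ iv b) = ENNReal.ofReal |a| * ENNReal.ofReal |b| := by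
  rw [Measure.prod_prod, volume_iv, volume_iv]

lemma integrable_F (a b : ℝ) :
    Integrable (fun st : ℝ × ℝ => phi st.1 a * phi st.2 b) (volume.prod volume) := by
  rw [Fprod_eq]
  refine Integrable.const_mul ?_ _
  refine (integrable_indicator_iff (measurableSet_ivprod a b)).2 ?_
  refine integrableOn_const ?_
  rw [volume_ivprod]
  exact (ENNReal.mul_lt_top ENNReal.ofReal_lt_top ENNReal.ofReal_lt_top).ne

lemma integral_F (a b : ℝ) :
    ∫ st : ℝ × ℝ, phi st.1 a * phi st.2 b ∂(volume.prod volume) = a * b := by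
  rw [Fprod_eq]
  rw [MeasureTheory.integral_const_mul]
  rw [integral_indicator_const (1:ℝ) (measurableSet_ivprod a b), measureReal_def, volume_ivprod,
    ← ENNReal.ofReal_mul (abs_nonneg a), ENNReal.toReal_ofReal (by positivity), smul_eq_mul,
    mul_one]
  rw [show sg a * sg b * (|a| * |b|) = (sg a * |a|) * (sg b * |b|) from by ring,
    sg_mul_abs, sg_mul_abs]

lemma integral_abs_F (a b : ℝ) :
    ∫ st : ℝ × ℝ, ‖phi st.1 a * phi st.2 b‖ ∂(volume.prod volume) = |a| * |b| := by
  have h : (fun st : ℝ × ℝ => ‖phi st.1 a * phi st.2 b‖)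
      = fun st => Set.indicator (iv a ×ˢ iv b) (fun _ => (1:ℝ)) st := by
    funext st
    rw [congrFun (Fprod_eq a b) st, Real.norm_eq_abs, abs_mul, abs_mul, abs_sg, abs_sg]
    simp only [Set.indicator_apply]
    split_ifs <;> norm_num
  rw [h, integral_indicator_const (1:ℝ) (measurableSet_ivprod a b), measureReal_def, volume_ivprod,
    ← ENNReal.ofReal_mul (abs_nonneg a), ENNReal.toReal_ofReal (by positivity), smul_eq_mul,
    mul_one]

lemma measurable_phi_pair : Measurable (fun x : ℝ × ℝ => phi x.1 x.2) := by
  unfold phi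
  exact (Measurable.ite (measurableSet_lt measurable_fst measurable_snd)
    measurable_const measurable_const).sub
    (Measurable.ite (measurableSet_lt measurable_fst measurable_const)
      measurable_const measurable_const)

lemma measurable_G : Measurable (fun q : (ℝ × ℝ) × (ℝ × ℝ) => phi q.2.1 q.1.1 * phi q.2.2 q.1.2) := by
  have h1 : Measurable (fun q : (ℝ × ℝ) × (ℝ × ℝ) => phi q.2.1 q.1.1) :=
    measurable_phi_pair.comp ((measurable_fst.comp measurable_snd).prodMk
      (measurable_fst.comp measurable_fst))
  have h2 : Measurable (fun q : (ℝ × ℝ) × (ℝ × ℝ) => phi q.2.2 q.1.2) :=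
    measurable_phi_pair.comp ((measurable_snd.comp measurable_snd).prodMk
      (measurable_snd.comp measurable_fst))
  exact h1.mul h2

end

noncomputable section
open scoped ENNReal
open MeasureTheory Set
open scoped Classical

variable {ν₁ ν₂ : Measure ℝ} [IsProbabilityMeasure ν₁] [IsProbabilityMeasure ν₂]
variable {ρ : Measure (ℝ × ℝ)} [IsProbabilityMeasure ρ]

lemma integrable_fst_sq (h1 : ρ.map Prod.fst = ν₁) (hm : Integrable (fun x => x ^ 2) ν₁) :
    Integrable (fun p : ℝ × ℝ => p.1 ^ 2) ρ := by
  rw [← h1] at hm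
  exact (integrable_map_measure (measurable_id.pow_const 2).aestronglyMeasurable
    measurable_fst.aemeasurable).1 hm

lemma integrable_snd_sq (h2 : ρ.map Prod.snd = ν₂) (hm : Integrable (fun x => x ^ 2) ν₂) :
    Integrable (fun p : ℝ × ℝ => p.2 ^ 2) ρ := by
  rw [← h2] at hm
  exact (integrable_map_measure (measurable_id.pow_const 2).aestronglyMeasurable
    measurable_snd.aemeasurable).1 hm

lemma integrable_absmul (h1 : ρ.map Prod.fst = ν₁) (h2 : ρ.map Prod.snd = ν₂)
    (hm1 : Integrable (fun x => x ^ 2) ν₁) (hm2 : Integrable (fun x => x ^ 2) ν₂) :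
    Integrable (fun p : ℝ × ℝ => |p.1| * |p.2|) ρ := by
  refine Integrable.mono' (((integrable_fst_sq h1 hm1).add (integrable_snd_sq h2 hm2)).div_const 2)
    (measurable_fst.abs.mul measurable_snd.abs).aestronglyMeasurable
    (Filter.Eventually.of_forall fun p => ?_)
  rw [Real.norm_eq_abs, abs_mul, abs_abs, abs_abs]
  simp only [Pi.add_apply]
  nlinarith [sq_nonneg (|p.1| - |p.2|), sq_abs p.1, sq_abs p.2]

lemma integrable_mul (h1 : ρ.map Prod.fst = ν₁) (h2 : ρ.map Prod.snd = ν₂)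
    (hm1 : Integrable (fun x => x ^ 2) ν₁) (hm2 : Integrable (fun x => x ^ 2) ν₂) :
    Integrable (fun p : ℝ × ℝ => p.1 * p.2) ρ := by
  refine Integrable.mono' (integrable_absmul h1 h2 hm1 hm2)
    (measurable_fst.mul measurable_snd).aestronglyMeasurable
    (Filter.Eventually.of_forall fun p => ?_)
  rw [Real.norm_eq_abs, abs_mul]

lemma key_repr (h1 : ρ.map Prod.fst = ν₁) (h2 : ρ.map Prod.snd = ν₂)
    (hm1 : Integrable (fun x => x ^ 2) ν₁) (hm2 : Integrable (fun x => x ^ 2) ν₂) :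
    ∫ p, p.1 * p.2 ∂ρ
      = ∫ st : ℝ × ℝ, (∫ p, phi st.1 p.1 * phi st.2 p.2 ∂ρ) ∂(volume.prod volume) := by
  have hG : Integrable
      (Function.uncurry fun (p : ℝ × ℝ) (st : ℝ × ℝ) => phi st.1 p.1 * phi st.2 p.2)
      (ρ.prod (volume.prod volume)) := by
    have hmeas : AEStronglyMeasurable
        (Function.uncurry fun (p : ℝ × ℝ) (st : ℝ × ℝ) => phi st.1 p.1 * phi st.2 p.2)
        (ρ.prod (volume.prod volume)) := measurable_G.aestronglyMeasurable
    rw [integrable_prod_iff hmeas]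
    constructor
    · exact Filter.Eventually.of_forall fun p => integrable_F p.1 p.2
    · have : (fun p : ℝ × ℝ => ∫ st : ℝ × ℝ, ‖phi st.1 p.1 * phi st.2 p.2‖ ∂(volume.prod volume))
          = fun p => |p.1| * |p.2| := by
        funext p; exact integral_abs_F p.1 p.2
      simp only [Function.uncurry_apply_pair]
      rw [this]
      exact integrable_absmul h1 h2 hm1 hm2
  have step1 : ∫ p, p.1 * p.2 ∂ρ
      = ∫ p : ℝ × ℝ, (∫ st : ℝ × ℝ, phi st.1 p.1 * phi st.2 p.2 ∂(volume.prod volume)) ∂ρ := by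
    refine integral_congr_ae (Filter.Eventually.of_forall fun p => ?_)
    simpa using (integral_F p.1 p.2).symm
  rw [step1]
  exact integral_integral_swap hG

lemma integrable_ind {S : Set (ℝ × ℝ)} (hS : MeasurableSet S) :
    Integrable (fun p => S.indicator (fun _ => (1:ℝ)) p) ρ :=
  (integrable_indicator_iff hS).2 (integrableOn_const (measure_ne_top ρ S))

lemma integral_ind {S : Set (ℝ × ℝ)} (hS : MeasurableSet S) :
    ∫ p, S.indicator (fun _ => (1:ℝ)) p ∂ρ = (ρ S).toReal := by
  rw [integral_indicator_const (1:ℝ) hS, smul_eq_mul, mul_one, measureReal_def]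

lemma inner_val (h1 : ρ.map Prod.fst = ν₁) (h2 : ρ.map Prod.snd = ν₂) (s t : ℝ) :
    ∫ p, phi s p.1 * phi t p.2 ∂ρ
      = (ρ {p : ℝ × ℝ | s < p.1 ∧ t < p.2}).toReal
        - (if s < 0 then (1:ℝ) else 0) * (ν₂ (Set.Ioi t)).toReal
        - (if t < 0 then (1:ℝ) else 0) * (ν₁ (Set.Ioi s)).toReal
        + (if s < 0 then (1:ℝ) else 0) * (if t < 0 then (1:ℝ) else 0) := by
  have hmS : MeasurableSet {p : ℝ × ℝ | s < p.1 ∧ t < p.2} :=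
    (measurable_fst measurableSet_Ioi).inter (measurable_snd measurableSet_Ioi)
  have hmA : MeasurableSet {p : ℝ × ℝ | s < p.1} := measurable_fst measurableSet_Ioi
  have hmB : MeasurableSet {p : ℝ × ℝ | t < p.2} := measurable_snd measurableSet_Ioi
  have hfun : (fun p : ℝ × ℝ => phi s p.1 * phi t p.2)
      = fun p => Set.indicator {p : ℝ × ℝ | s < p.1 ∧ t < p.2} (fun _ => (1:ℝ)) p
        - (if s < 0 then (1:ℝ) else 0) * Set.indicator {p : ℝ × ℝ | t < p.2} (fun _ => (1:ℝ)) p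
        - (if t < 0 then (1:ℝ) else 0) * Set.indicator {p : ℝ × ℝ | s < p.1} (fun _ => (1:ℝ)) p
        + (if s < 0 then (1:ℝ) else 0) * (if t < 0 then (1:ℝ) else 0) := by
    funext p
    simp only [phi, Set.indicator_apply, Set.mem_setOf_eq]
    by_cases hx : s < p.1 <;> by_cases hy : t < p.2 <;> by_cases hs0 : s < 0 <;>
      by_cases ht0 : t < 0 <;> simp [hx, hy, hs0, ht0]
  rw [hfun]
  have i1 := integrable_ind (ρ := ρ) hmS
  have i2 : Integrable (fun p : ℝ × ℝ =>
      (if s < 0 then (1:ℝ) else 0) * Set.indicator {p : ℝ × ℝ | t < p.2} (fun _ => (1:ℝ)) p) ρ :=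
    (integrable_ind (ρ := ρ) hmB).const_mul _
  have i3 : Integrable (fun p : ℝ × ℝ =>
      (if t < 0 then (1:ℝ) else 0) * Set.indicator {p : ℝ × ℝ | s < p.1} (fun _ => (1:ℝ)) p) ρ :=
    (integrable_ind (ρ := ρ) hmA).const_mul _
  have j1 : Integrable (fun p : ℝ × ℝ =>
      Set.indicator {p : ℝ × ℝ | s < p.1 ∧ t < p.2} (fun _ => (1:ℝ)) p
        - (if s < 0 then (1:ℝ) else 0) * Set.indicator {p : ℝ × ℝ | t < p.2} (fun _ => (1:ℝ)) p) ρ :=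
    by exact i1.sub i2
  have j2 : Integrable (fun p : ℝ × ℝ =>
      (Set.indicator {p : ℝ × ℝ | s < p.1 ∧ t < p.2} (fun _ => (1:ℝ)) p
        - (if s < 0 then (1:ℝ) else 0) * Set.indicator {p : ℝ × ℝ | t < p.2} (fun _ => (1:ℝ)) p)
        - (if t < 0 then (1:ℝ) else 0) * Set.indicator {p : ℝ × ℝ | s < p.1} (fun _ => (1:ℝ)) p) ρ :=
    by exact j1.sub i3
  have eA : ρ {p : ℝ × ℝ | s < p.1} = ν₁ (Set.Ioi s) := by
    rw [← h1, Measure.map_apply measurable_fst measurableSet_Ioi]; rfl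
  have eB : ρ {p : ℝ × ℝ | t < p.2} = ν₂ (Set.Ioi t) := by
    rw [← h2, Measure.map_apply measurable_snd measurableSet_Ioi]; rfl
  simp only [integral_add j2 (integrable_const _), integral_sub j1 i3, integral_sub i1 i2,
    integral_const_mul, integral_ind (ρ := ρ) hmS, integral_ind (ρ := ρ) hmA,
    integral_ind (ρ := ρ) hmB, integral_const, measureReal_def, measure_univ, ENNReal.toReal_one, smul_eq_mul,
    one_mul, eA, eB]

end

noncomputable section
open scoped ENNReal
open MeasureTheory Set

variable {ν₁ ν₂ : Measure ℝ} [IsProbabilityMeasure ν₁] [IsProbabilityMeasure ν₂]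
variable {ρ : Measure (ℝ × ℝ)} [IsProbabilityMeasure ρ]

lemma integral_mul_le (h1 : ρ.map Prod.fst = ν₁) (h2 : ρ.map Prod.snd = ν₂)
    (hm1 : Integrable (fun x => x ^ 2) ν₁) (hm2 : Integrable (fun x => x ^ 2) ν₂) :
    ∫ p, p.1 * p.2 ∂ρ ≤ ∫ p, p.1 * p.2 ∂(piQ ν₁ ν₂) := by
  rw [key_repr h1 h2 hm1 hm2, key_repr (piQ_fst (ν₁ := ν₁) (ν₂ := ν₂)) piQ_snd hm1 hm2]
  have hGρ : Integrable
      (Function.uncurry fun (p : ℝ × ℝ) (st : ℝ × ℝ) => phi st.1 p.1 * phi st.2 p.2)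
      (ρ.prod (volume.prod volume)) := by
    have hmeas : AEStronglyMeasurable
        (Function.uncurry fun (p : ℝ × ℝ) (st : ℝ × ℝ) => phi st.1 p.1 * phi st.2 p.2)
        (ρ.prod (volume.prod volume)) := measurable_G.aestronglyMeasurable
    rw [integrable_prod_iff hmeas]
    refine ⟨Filter.Eventually.of_forall fun p => integrable_F p.1 p.2, ?_⟩
    simp only [Function.uncurry_apply_pair]
    have : (fun p : ℝ × ℝ => ∫ st : ℝ × ℝ, ‖phi st.1 p.1 * phi st.2 p.2‖ ∂(volume.prod volume))
        = fun p => |p.1| * |p.2| := by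
      funext p; exact integral_abs_F p.1 p.2
    rw [this]
    exact integrable_absmul h1 h2 hm1 hm2
  have hGQ : Integrable
      (Function.uncurry fun (p : ℝ × ℝ) (st : ℝ × ℝ) => phi st.1 p.1 * phi st.2 p.2)
      ((piQ ν₁ ν₂).prod (volume.prod volume)) := by
    have hmeas : AEStronglyMeasurable
        (Function.uncurry fun (p : ℝ × ℝ) (st : ℝ × ℝ) => phi st.1 p.1 * phi st.2 p.2)
        ((piQ ν₁ ν₂).prod (volume.prod volume)) := measurable_G.aestronglyMeasurable
    rw [integrable_prod_iff hmeas]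
    refine ⟨Filter.Eventually.of_forall fun p => integrable_F p.1 p.2, ?_⟩
    simp only [Function.uncurry_apply_pair]
    have : (fun p : ℝ × ℝ => ∫ st : ℝ × ℝ, ‖phi st.1 p.1 * phi st.2 p.2‖ ∂(volume.prod volume))
        = fun p => |p.1| * |p.2| := by
      funext p; exact integral_abs_F p.1 p.2
    rw [this]
    exact integrable_absmul piQ_fst piQ_snd hm1 hm2
  refine integral_mono ?_ ?_ ?_
  · exact hGρ.integral_prod_right
  · exact hGQ.integral_prod_right
  · intro st
    dsimp only
    rw [inner_val h1 h2 st.1 st.2, inner_val (piQ_fst (ν₁ := ν₁) (ν₂ := ν₂)) piQ_snd st.1 st.2]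
    have hkey : ρ {p : ℝ × ℝ | st.1 < p.1 ∧ st.2 < p.2}
        ≤ piQ ν₁ ν₂ {p : ℝ × ℝ | st.1 < p.1 ∧ st.2 < p.2} := by
      rw [piQ_survival, le_min_iff]
      constructor
      · have : {p : ℝ × ℝ | st.1 < p.1 ∧ st.2 < p.2} ⊆ Prod.fst ⁻¹' (Set.Ioi st.1) :=
          fun p hp => hp.1
        refine le_trans (measure_mono this) ?_
        rw [← h1, Measure.map_apply measurable_fst measurableSet_Ioi]
      · have : {p : ℝ × ℝ | st.1 < p.1 ∧ st.2 < p.2} ⊆ Prod.snd ⁻¹' (Set.Ioi st.2) :=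
          fun p hp => hp.2
        refine le_trans (measure_mono this) ?_
        rw [← h2, Measure.map_apply measurable_snd measurableSet_Ioi]
    have := ENNReal.toReal_le_toReal (measure_ne_top ρ _) (measure_ne_top (piQ ν₁ ν₂) _) |>.2 hkey
    linarith

lemma integrable_cost (h1 : ρ.map Prod.fst = ν₁) (h2 : ρ.map Prod.snd = ν₂)
    (hm1 : Integrable (fun x => x ^ 2) ν₁) (hm2 : Integrable (fun x => x ^ 2) ν₂) :
    Integrable (fun p : ℝ × ℝ => (p.1 - p.2) ^ 2) ρ := by
  have h := ((integrable_fst_sq h1 hm1).add (integrable_snd_sq h2 hm2)).sub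
    ((integrable_mul h1 h2 hm1 hm2).const_mul 2)
  refine (Integrable.congr h (Filter.Eventually.of_forall fun p => ?_))
  simp only [Pi.add_apply, Pi.sub_apply]
  ring

lemma cost_expand (h1 : ρ.map Prod.fst = ν₁) (h2 : ρ.map Prod.snd = ν₂)
    (hm1 : Integrable (fun x => x ^ 2) ν₁) (hm2 : Integrable (fun x => x ^ 2) ν₂) :
    ∫ p, (p.1 - p.2) ^ 2 ∂ρ
      = (∫ x, x ^ 2 ∂ν₁) + (∫ x, x ^ 2 ∂ν₂) - 2 * ∫ p, p.1 * p.2 ∂ρ := by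
  have hsm1 : Measurable (fun x : ℝ => x ^ 2) := measurable_id.pow_const 2
  have e1 : ∫ p : ℝ × ℝ, p.1 ^ 2 ∂ρ = ∫ x, x ^ 2 ∂ν₁ := by
    rw [← h1, integral_map measurable_fst.aemeasurable hsm1.aestronglyMeasurable]
  have e2 : ∫ p : ℝ × ℝ, p.2 ^ 2 ∂ρ = ∫ x, x ^ 2 ∂ν₂ := by
    rw [← h2, integral_map measurable_snd.aemeasurable hsm1.aestronglyMeasurable]
  have hfun : (fun p : ℝ × ℝ => (p.1 - p.2) ^ 2)
      = fun p : ℝ × ℝ => (p.1 ^ 2 + p.2 ^ 2) - 2 * (p.1 * p.2) := by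
    funext p; ring
  rw [hfun]
  have ha : Integrable (fun p : ℝ × ℝ => p.1 ^ 2 + p.2 ^ 2) ρ := by
    exact (integrable_fst_sq h1 hm1).add (integrable_snd_sq h2 hm2)
  have hb : Integrable (fun p : ℝ × ℝ => 2 * (p.1 * p.2)) ρ :=
    (integrable_mul h1 h2 hm1 hm2).const_mul 2
  rw [integral_sub ha hb, integral_add (integrable_fst_sq h1 hm1) (integrable_snd_sq h2 hm2),
    integral_const_mul, e1, e2]

lemma cost_ge (h1 : ρ.map Prod.fst = ν₁) (h2 : ρ.map Prod.snd = ν₂)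
    (hm1 : Integrable (fun x => x ^ 2) ν₁) (hm2 : Integrable (fun x => x ^ 2) ν₂) :
    ∫ p, (p.1 - p.2) ^ 2 ∂(piQ ν₁ ν₂) ≤ ∫ p, (p.1 - p.2) ^ 2 ∂ρ := by
  rw [cost_expand h1 h2 hm1 hm2,
    cost_expand (piQ_fst (ν₁ := ν₁) (ν₂ := ν₂)) piQ_snd hm1 hm2]
  have := integral_mul_le h1 h2 hm1 hm2
  linarith

lemma W2sq_eq_quantile_integral
    (hm1 : Integrable (fun x => x ^ 2) ν₁) (hm2 : Integrable (fun x => x ^ 2) ν₂) :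
    W2sq ν₁ ν₂ = ∫ t, (quantile ν₁ t - quantile ν₂ t) ^ 2 ∂U := by
  have hpiQ : ∫ p, (p.1 - p.2) ^ 2 ∂(piQ ν₁ ν₂)
      = ∫ t, (quantile ν₁ t - quantile ν₂ t) ^ 2 ∂U := by
    rw [piQ, integral_map aemeasurable_pairQ
      (show AEStronglyMeasurable (fun p : ℝ × ℝ => (p.1 - p.2) ^ 2)
        (Measure.map (fun t => (quantile ν₁ t, quantile ν₂ t)) U) from
        ((measurable_fst.sub measurable_snd).pow_const 2).aestronglyMeasurable)]
  have hmem : (∫ p, (p.1 - p.2) ^ 2 ∂(piQ ν₁ ν₂)) ∈ { c | ∃ π : Measure (ℝ × ℝ),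
      IsProbabilityMeasure π ∧ π.map Prod.fst = ν₁ ∧ π.map Prod.snd = ν₂ ∧
      c = ∫ p, (p.1 - p.2) ^ 2 ∂π } :=
    ⟨piQ ν₁ ν₂, inferInstance, piQ_fst, piQ_snd, rfl⟩
  have hlb : ∀ c ∈ { c | ∃ π : Measure (ℝ × ℝ),
      IsProbabilityMeasure π ∧ π.map Prod.fst = ν₁ ∧ π.map Prod.snd = ν₂ ∧
      c = ∫ p, (p.1 - p.2) ^ 2 ∂π }, (∫ p, (p.1 - p.2) ^ 2 ∂(piQ ν₁ ν₂)) ≤ c := by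
    rintro c ⟨π, hπ, hf, hs, rfl⟩
    exact cost_ge hf hs hm1 hm2
  rw [← hpiQ, W2sq]
  exact le_antisymm (csInf_le ⟨_, hlb⟩ hmem) (le_csInf ⟨_, hmem⟩ hlb)

end

noncomputable section
open scoped ENNReal
open MeasureTheory Set

variable {ν ν' : Measure ℝ} [IsProbabilityMeasure ν] [IsProbabilityMeasure ν']

lemma integrable_quantile_sq (hm : Integrable (fun x => x ^ 2) ν) :
    Integrable (fun t => (quantile ν t) ^ 2) U := by
  rw [← map_quantile (ν := ν)] at hm
  have hsm : AEStronglyMeasurable (fun x : ℝ => x ^ 2) (U.map (quantile ν)) :=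
    (measurable_id.pow_const 2).aestronglyMeasurable
  exact (integrable_map_measure hsm aemeasurable_quantile).1 hm

lemma integrable_quantile_diff_sq (hm : Integrable (fun x => x ^ 2) ν)
    (hm' : Integrable (fun x => x ^ 2) ν') :
    Integrable (fun t => (quantile ν t - quantile ν' t) ^ 2) U := by
  refine Integrable.mono' (((integrable_quantile_sq hm).const_mul 2).add
    ((integrable_quantile_sq hm').const_mul 2))
    (((aemeasurable_quantile.sub aemeasurable_quantile).pow_const 2).aestronglyMeasurable)
    (Filter.Eventually.of_forall fun t => ?_)
  rw [Real.norm_eq_abs, abs_of_nonneg (sq_nonneg _)]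
  simp only [Pi.add_apply]
  nlinarith [sq_nonneg (quantile ν t + quantile ν' t)]

lemma mean_min {J : ℕ} (hJ : 0 < J) (a : Fin J → ℝ) (c : ℝ) :
    ∑ j, (a j - (J : ℝ)⁻¹ * ∑ k, a k) ^ 2 ≤ ∑ j, (a j - c) ^ 2 := by
  set m : ℝ := (J : ℝ)⁻¹ * ∑ k, a k with hm
  have hJ' : (J : ℝ) ≠ 0 := Nat.cast_ne_zero.2 hJ.ne'
  have hsum : ∑ k, a k = (J : ℝ) * m := by
    rw [hm]; field_simp
  have key : ∑ j, (a j - c) ^ 2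
      = ∑ j, (a j - m) ^ 2 + (2 * (m - c) * ∑ j, a j + (J : ℝ) * (c ^ 2 - m ^ 2)) := by
    have e : ∀ j : Fin J, (a j - c) ^ 2
        = ((a j - m) ^ 2 + (2 * (m - c) * a j + (c ^ 2 - m ^ 2))) := fun j => by ring
    rw [Finset.sum_congr rfl fun j _ => e j, Finset.sum_add_distrib, Finset.sum_add_distrib,
      ← Finset.mul_sum, Finset.sum_const, Finset.card_univ, Fintype.card_fin, nsmul_eq_mul]
  rw [key, hsum]
  have hJpos : (0:ℝ) < (J:ℝ) := by exact_mod_cast hJ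
  nlinarith [sq_nonneg (m - c)]


end

/-- The measure μ_B whose quantile function is the average of the quantile functions
of μ₁,…,μ_J minimizes η ↦ (1/J)∑ⱼ W₂²(μⱼ, η). -/
theorem stmt_1 {J : ℕ} (hJ : 0 < J) (μ : Fin J → Measure ℝ) (μB : Measure ℝ)
    [∀ j, IsProbabilityMeasure (μ j)] [IsProbabilityMeasure μB]
    (hmom : ∀ j, Integrable (fun x => x ^ 2) (μ j))
    (hmomB : Integrable (fun x => x ^ 2) μB)
    (hquant : ∀ t ∈ Set.Ioo (0 : ℝ) 1,
      quantile μB t = (J : ℝ)⁻¹ * ∑ k, quantile (μ k) t) :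
    ∀ η : Measure ℝ, IsProbabilityMeasure η → Integrable (fun x => x ^ 2) η →
      (J : ℝ)⁻¹ * ∑ j, W2sq (μ j) μB ≤ (J : ℝ)⁻¹ * ∑ j, W2sq (μ j) η := by
  intro η hη hmomη
  haveI := hη
  refine mul_le_mul_of_nonneg_left ?_ (by positivity)
  have hWB : ∀ j, W2sq (μ j) μB = ∫ t, (quantile (μ j) t - quantile μB t) ^ 2 ∂U :=
    fun j => W2sq_eq_quantile_integral (hmom j) hmomB
  have hWη : ∀ j, W2sq (μ j) η = ∫ t, (quantile (μ j) t - quantile η t) ^ 2 ∂U :=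
    fun j => W2sq_eq_quantile_integral (hmom j) hmomη
  have hintB : ∀ j : Fin J, Integrable (fun t => (quantile (μ j) t - quantile μB t) ^ 2) U :=
    fun j => integrable_quantile_diff_sq (hmom j) hmomB
  have hintη : ∀ j : Fin J, Integrable (fun t => (quantile (μ j) t - quantile η t) ^ 2) U :=
    fun j => integrable_quantile_diff_sq (hmom j) hmomη
  calc ∑ j, W2sq (μ j) μB
      = ∑ j, ∫ t, (quantile (μ j) t - quantile μB t) ^ 2 ∂U :=
        Finset.sum_congr rfl fun j _ => hWB j
    _ = ∫ t, ∑ j, (quantile (μ j) t - quantile μB t) ^ 2 ∂U :=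
        (integral_finset_sum _ fun j _ => hintB j).symm
    _ ≤ ∫ t, ∑ j, (quantile (μ j) t - quantile η t) ^ 2 ∂U := by
        refine integral_mono_ae (integrable_finset_sum _ fun j _ => hintB j)
          (integrable_finset_sum _ fun j _ => hintη j) ?_
        have hae : ∀ᵐ t ∂U, t ∈ Set.Ioo (0:ℝ) 1 := by
          rw [U]
          exact ae_restrict_mem measurableSet_Ioo
        filter_upwards [hae] with t ht
        rw [hquant t ht]
        exact mean_min hJ (fun k => quantile (μ k) t) (quantile η t)
    _ = ∑ j, ∫ t, (quantile (μ j) t - quantile η t) ^ 2 ∂U :=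
        integral_finset_sum _ fun j _ => hintη j
    _ = ∑ j, W2sq (μ j) η := Finset.sum_congr rfl fun j _ => (hWη j).symm

end
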